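/- If μ is a nonzero complex number with μ² + μ⁻² = 2 − ω, μ + μ⁻¹ ≠ 0, and |μ| ≠ 1, then |τ_n| tends to infinity as n → ∞. -/

import Mathlib

open Matrix

/-- The matrix `X = [[1,1],[0,1]]`. -/
noncomputable def Xmat : Matrix (Fin 2) (Fin 2) ℂ := !![1, 1; 0, 1]

/-- The matrix `Y = [[1,0],[ω,1]]`. -/
noncomputable def Ymat (ω : ℂ) : Matrix (Fin 2) (Fin 2) ℂ := !![1, 0; ω, 1]

/-- `τ n` is the trace of `X ⬝ (Y ⬝ X⁻¹)^n`. -/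
noncomputable def τ (ω : ℂ) (n : ℕ) : ℂ := (Xmat * (Ymat ω * Xmat⁻¹) ^ n).trace

lemma Xinv : Xmat⁻¹ = !![1, -1; 0, 1] := by
  apply Matrix.inv_eq_right_inv
  ext i j
  fin_cases i <;> fin_cases j <;>
    simp [Xmat, Matrix.mul_apply, Fin.sum_univ_two, Matrix.one_apply]

lemma Msq (ω : ℂ) : (Ymat ω * Xmat⁻¹) ^ 2 = (2 - ω) • (Ymat ω * Xmat⁻¹) - 1 := by
  rw [Xinv]
  ext i j
  fin_cases i <;> fin_cases j <;>
    simp [Ymat, pow_two, Matrix.mul_apply, Fin.sum_univ_two, Matrix.one_apply] <;> ring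

lemma tau_rec (ω : ℂ) (n : ℕ) : τ ω (n + 2) = (2 - ω) * τ ω (n + 1) - τ ω n := by
  set M := Ymat ω * Xmat⁻¹ with hM
  have h : Xmat * M ^ (n + 2) = (2 - ω) • (Xmat * M ^ (n + 1)) - Xmat * M ^ n := by
    have h2 : M ^ (n + 2) = M ^ n * M ^ 2 := by rw [pow_add]
    rw [h2, Msq, Matrix.mul_sub, Matrix.mul_sub, Matrix.mul_smul, Matrix.mul_one,
      Matrix.mul_smul, pow_succ, ← Matrix.mul_assoc]
  rw [τ, τ, τ, ← hM, h]
  simp [Matrix.trace_sub, Matrix.trace_smul, smul_eq_mul]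

lemma tau_zero (ω : ℂ) : τ ω 0 = 2 := by
  simp [τ, Xmat, Matrix.trace_fin_two]
  norm_num

lemma tau_one (ω : ℂ) : τ ω 1 = 2 := by
  rw [τ, pow_one, Xinv]
  simp [Ymat, Xmat, Matrix.trace_fin_two, Matrix.mul_apply, Fin.sum_univ_two]
  ring

lemma tau_closed (ω μ : ℂ) (hμ : μ ≠ 0)
    (hchar : μ ^ 2 + μ⁻¹ ^ 2 = 2 - ω) (hden : μ + μ⁻¹ ≠ 0) (n : ℕ) :
    τ ω n = (2 / (μ ^ 2 + 1)) * (μ ^ 2) ^ n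
      + (2 * μ ^ 2 / (μ ^ 2 + 1)) * ((μ ^ 2)⁻¹) ^ n := by
  have hne : μ ^ 2 ≠ 0 := pow_ne_zero _ hμ
  have h1 : μ ^ 2 + 1 ≠ 0 := by
    have hmul : μ * (μ + μ⁻¹) = μ ^ 2 + 1 := by field_simp
    rw [← hmul]; exact mul_ne_zero hμ hden
  set a := 2 / (μ ^ 2 + 1) with ha
  set b := 2 * μ ^ 2 / (μ ^ 2 + 1) with hb
  set α := μ ^ 2 with hα
  set β := (μ ^ 2)⁻¹ with hβ
  have hαβ : α * β = 1 := mul_inv_cancel₀ hne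
  have hsum : α + β = 2 - ω := by rw [← hchar, hα, hβ, inv_pow]
  have key : ∀ m, τ ω m = a * α ^ m + b * β ^ m
      ∧ τ ω (m + 1) = a * α ^ (m + 1) + b * β ^ (m + 1) := by
    intro m
    induction m with
    | zero =>
      constructor
      · rw [tau_zero]; simp only [pow_zero, mul_one, ha, hb]; field_simp; ring
      · rw [tau_one]; simp only [pow_one, ha, hb, hα, hβ]
        have h1' : μ ^ 2 + 1 ≠ 0 := h1
        field_simp
        have h2 : μ ^ 2 * (1 / μ ^ 2) = 1 := mul_one_div_cancel hne
        simp only [zero_add, pow_one, h2]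
    | succ k ih =>
      refine ⟨ih.2, ?_⟩
      have : k + 1 + 1 = k + 2 := rfl
      rw [this, tau_rec, ih.1, ih.2, ← hsum]
      linear_combination (a * α ^ k + b * β ^ k) * hαβ
  exact (key n).1

lemma aux_tendsto (a b α β : ℂ) (ha : a ≠ 0) (hα : 1 < ‖α‖)
    (hβ : ‖β‖ ≤ 1) :
    Filter.Tendsto (fun n : ℕ => ‖a * α ^ n + b * β ^ n‖)
      Filter.atTop Filter.atTop := by
  have h0 : 0 < ‖a‖ := norm_pos_iff.mpr ha
  have hlower : ∀ n : ℕ, ‖a‖ * ‖α‖ ^ n + -‖b‖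
      ≤ ‖a * α ^ n + b * β ^ n‖ := by
    intro n
    have h1 : ‖a * α ^ n‖ - ‖b * β ^ n‖
        ≤ ‖a * α ^ n + b * β ^ n‖ := by
      have := norm_sub_norm_le (a * α ^ n) (-(b * β ^ n))
      simpa [sub_neg_eq_add] using this
    have h2 : ‖b * β ^ n‖ ≤ ‖b‖ := by
      rw [norm_mul, norm_pow]
      calc ‖b‖ * ‖β‖ ^ n
          ≤ ‖b‖ * 1 := by
            have : ‖β‖ ^ n ≤ 1 := pow_le_one₀ (norm_nonneg β) hβ
            exact mul_le_mul_of_nonneg_left this (norm_nonneg b)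
        _ = ‖b‖ := mul_one _
    calc ‖a‖ * ‖α‖ ^ n + -‖b‖
        = ‖a * α ^ n‖ - ‖b‖ := by rw [norm_mul, norm_pow]; ring
      _ ≤ ‖a * α ^ n‖ - ‖b * β ^ n‖ := by linarith
      _ ≤ _ := h1
  apply Filter.tendsto_atTop_mono hlower
  exact Filter.tendsto_atTop_add_const_right _ _
    ((tendsto_pow_atTop_atTop_of_one_lt hα).const_mul_atTop h0)

theorem tau_abs_tendsto_atTop (ω μ : ℂ) (hμ : μ ≠ 0)
    (hchar : μ ^ 2 + μ⁻¹ ^ 2 = 2 - ω) (hden : μ + μ⁻¹ ≠ 0)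
    (habs : ‖μ‖ ≠ 1) :
    Filter.Tendsto (fun n : ℕ => ‖τ ω n‖) Filter.atTop Filter.atTop := by
  have hne : μ ^ 2 ≠ 0 := pow_ne_zero _ hμ
  have h1 : μ ^ 2 + 1 ≠ 0 := by
    have hmul : μ * (μ + μ⁻¹) = μ ^ 2 + 1 := by field_simp
    rw [← hmul]; exact mul_ne_zero hμ hden
  have hcf := tau_closed ω μ hμ hchar hden
  have ha : (2 / (μ ^ 2 + 1) : ℂ) ≠ 0 := div_ne_zero two_ne_zero h1
  have hb : (2 * μ ^ 2 / (μ ^ 2 + 1) : ℂ) ≠ 0 :=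
    div_ne_zero (mul_ne_zero two_ne_zero hne) h1
  have habs2 : ‖μ ^ 2‖ = ‖μ‖ ^ 2 := norm_pow _ _
  have hpos : 0 < ‖μ‖ := norm_pos_iff.mpr hμ
  rcases habs.lt_or_gt with h | h
  · -- |μ| < 1
    have hαle : ‖μ ^ 2‖ ≤ 1 := by
      rw [habs2]; exact pow_le_one₀ (norm_nonneg μ) h.le
    have hβ : 1 < ‖(μ ^ 2)⁻¹‖ := by
      rw [norm_inv]
      have hlt : ‖μ ^ 2‖ < 1 := by
        rw [habs2]; exact pow_lt_one₀ (norm_nonneg μ) h two_ne_zero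
      exact (one_lt_inv₀ (norm_pos_iff.mpr hne)).mpr hlt
    have := aux_tendsto _ (2 / (μ ^ 2 + 1)) _ (μ ^ 2) hb hβ hαle
    exact this.congr fun n => by rw [hcf n, add_comm]
  · have hα : 1 < ‖μ ^ 2‖ := by
      rw [habs2]; exact one_lt_pow₀ h two_ne_zero
    have hβle : ‖(μ ^ 2)⁻¹‖ ≤ 1 := by
      rw [norm_inv]; exact inv_le_one_of_one_le₀ hα.le
    have := aux_tendsto _ (2 * μ ^ 2 / (μ ^ 2 + 1)) _ (μ ^ 2)⁻¹ ha hα hβle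
    exact this.congr fun n => by rw [← hcf n]
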